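/- Uniqueness of the compatible nimrep for torus modular invariants: given a torus modular invariant Z with data (D_+, D_-, β), set E = ⋃_{[u]_+ ∈ D_+*/D_+} ([u]_+ ∩ β([u]_+)). Then E is a lattice with L ⊆ E ⊆ L*, and the nimrep with boundary states L*/E* (action by translation) is the unique nimrep (up to equivalence) whose exponent multiplicities equal the diagonal entries Z_{[μ],[μ]}. -/

import Mathlib

/-!
STATEMENT 0: Every entry of a modular invariant for the lattice (torus) chiral
data is either 0 or 1.
-/

open scoped BigOperators
open Complex

noncomputable section

/-- The Euclidean dot product on `Fin n → ℝ`. -/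
def dotR {n : ℕ} (u v : Fin n → ℝ) : ℝ := ∑ i, u i * v i

lemma dotR_add_left {n : ℕ} (u v w : Fin n → ℝ) :
    dotR (u + v) w = dotR u w + dotR v w := by
  simp [dotR, add_mul, Finset.sum_add_distrib]

lemma dotR_neg_left {n : ℕ} (u w : Fin n → ℝ) : dotR (-u) w = -dotR u w := by
  simp [dotR]

/-- `L` is an even lattice: `u ⬝ u ∈ 2ℤ` for all `u ∈ L`. -/
def IsEvenLattice {n : ℕ} (L : AddSubgroup (Fin n → ℝ)) : Prop :=
  ∀ u ∈ L, ∃ m : ℤ, dotR u u = 2 * m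

/-- The dual lattice `L* = {x : x ⬝ L ⊆ ℤ}`. -/
def dualLattice {n : ℕ} (L : AddSubgroup (Fin n → ℝ)) : AddSubgroup (Fin n → ℝ) where
  carrier := {x | ∀ l ∈ L, ∃ m : ℤ, dotR x l = m}
  zero_mem' := fun l _ => ⟨0, by simp [dotR]⟩
  add_mem' := by
    intro a b ha hb l hl
    obtain ⟨m, hm⟩ := ha l hl
    obtain ⟨m', hm'⟩ := hb l hl
    exact ⟨m + m', by rw [dotR_add_left, hm, hm']; push_cast; ring⟩
  neg_mem' := by
    intro a ha l hl
    obtain ⟨m, hm⟩ := ha l hl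
    exact ⟨-m, by rw [dotR_neg_left, hm]; push_cast; ring⟩

/-- The group of primaries `L*/L`. -/
abbrev latQuot {n : ℕ} (L : AddSubgroup (Fin n → ℝ)) :=
  dualLattice L ⧸ (L.addSubgroupOf (dualLattice L))

/-- The class of an element of `L*` in `L*/L`. -/
def mkQ {n : ℕ} (L : AddSubgroup (Fin n → ℝ)) (x : dualLattice L) : latQuot L :=
  QuotientAddGroup.mk x

/-- The S-matrix of the lattice chiral data:
`S_{[u],[v]} = |L*/L|^{-1/2} exp(2 π i u⬝v)`. -/
def Smat {n : ℕ} (L : AddSubgroup (Fin n → ℝ)) [Fintype (latQuot L)] :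
    Matrix (latQuot L) (latQuot L) ℂ := fun x y =>
  (((Real.sqrt (Fintype.card (latQuot L)))⁻¹ : ℝ) : ℂ) *
    Complex.exp (2 * Real.pi * Complex.I *
      (dotR ((Quotient.out x : dualLattice L) : Fin n → ℝ)
            ((Quotient.out y : dualLattice L) : Fin n → ℝ)))

/-- `D_+ = {[d] : Z_{[d],[0]} = 1}` (at the level of `L*/L`). -/
def DpSet {n : ℕ} (L : AddSubgroup (Fin n → ℝ))
    (Z : latQuot L → latQuot L → ℕ) : Set (latQuot L) := {x | Z x 0 = 1}

/-- `D_- = {[d] : Z_{[0],[d]} = 1}` (at the level of `L*/L`). -/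
def DmSet {n : ℕ} (L : AddSubgroup (Fin n → ℝ))
    (Z : latQuot L → latQuot L → ℕ) : Set (latQuot L) := {y | Z 0 y = 1}

/-- Integrality of the pairing of two classes in `L*/L` (well defined modulo
`L` because `L ⬝ L* ⊆ ℤ`). -/
def pInt {n : ℕ} (L : AddSubgroup (Fin n → ℝ)) (x y : latQuot L) : Prop :=
  ∃ m : ℤ, dotR ((Quotient.out x : dualLattice L) : Fin n → ℝ)
               ((Quotient.out y : dualLattice L) : Fin n → ℝ) = m

/-- The classes in `L*/L` of elements of `D_±^*`. -/
def DpStar {n : ℕ} (L : AddSubgroup (Fin n → ℝ))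
    (Z : latQuot L → latQuot L → ℕ) : Set (latQuot L) :=
  {x | ∀ d ∈ DpSet L Z, pInt L x d}

def DmStar {n : ℕ} (L : AddSubgroup (Fin n → ℝ))
    (Z : latQuot L → latQuot L → ℕ) : Set (latQuot L) :=
  {x | ∀ d ∈ DmSet L Z, pInt L x d}


/-- The subgroup of `L*` of vectors pairing integrally with `E`. -/
def intAgainst {n : ℕ} (L E : AddSubgroup (Fin n → ℝ)) :
    AddSubgroup (dualLattice L) where
  carrier := {m | ∀ e ∈ E, ∃ z : ℤ, dotR (m : Fin n → ℝ) e = z}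
  zero_mem' := fun e _ => ⟨0, by simp [dotR]⟩
  add_mem' := by
    intro a b ha hb e he
    obtain ⟨z, hz⟩ := ha e he
    obtain ⟨z', hz'⟩ := hb e he
    refine ⟨z + z', ?_⟩
    push_cast
    rw [dotR_add_left, hz, hz']
  neg_mem' := by
    intro a ha e he
    obtain ⟨z, hz⟩ := ha e he
    refine ⟨-z, ?_⟩
    push_cast
    rw [dotR_neg_left, hz]

/-- The subgroup `E*/L` of `L*/L` (the kernel of the translation nimrep with
exponents `E/L`). -/
def Kdual {n : ℕ} (L E : AddSubgroup (Fin n → ℝ)) : AddSubgroup (latQuot L) :=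
  AddSubgroup.map (QuotientAddGroup.mk' (L.addSubgroupOf (dualLattice L)))
    (intAgainst L E)


lemma dotR_comm {n : ℕ} (u v : Fin n → ℝ) : dotR u v = dotR v u := by
  simp [dotR, mul_comm]

lemma dotR_smul_left {n : ℕ} (c : ℝ) (u w : Fin n → ℝ) :
    dotR (c • u) w = c * dotR u w := by
  simp [dotR, Finset.mul_sum, mul_assoc]

lemma dotR_self_nonneg {n : ℕ} (u : Fin n → ℝ) : 0 ≤ dotR u u :=
  Finset.sum_nonneg fun i _ => mul_self_nonneg _

lemma dotR_self_eq_zero {n : ℕ} {u : Fin n → ℝ} (h : dotR u u = 0) : u = 0 := by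
  have h2 := (Finset.sum_eq_zero_iff_of_nonneg
    (fun i (_ : i ∈ Finset.univ) => mul_self_nonneg (u i))).1 h
  funext i
  exact mul_self_eq_zero.1 (h2 i (Finset.mem_univ i))

lemma dotR_add_right {n : ℕ} (u v w : Fin n → ℝ) :
    dotR u (v + w) = dotR u v + dotR u w := by
  rw [dotR_comm, dotR_add_left, dotR_comm v u, dotR_comm w u]

lemma dotR_neg_right {n : ℕ} (u w : Fin n → ℝ) : dotR u (-w) = -dotR u w := by
  rw [dotR_comm, dotR_neg_left, dotR_comm]

lemma dotR_sub_right {n : ℕ} (u v w : Fin n → ℝ) :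
    dotR u (v - w) = dotR u v - dotR u w := by
  rw [sub_eq_add_neg, dotR_add_right, dotR_neg_right, sub_eq_add_neg]

/-- The dot product as a bilinear form. -/
def dotForm (n : ℕ) : LinearMap.BilinForm ℝ (Fin n → ℝ) :=
  LinearMap.mk₂ ℝ dotR dotR_add_left
    (fun c u w => by rw [dotR_smul_left]; rfl) dotR_add_right
    (fun c u w => by rw [dotR_comm, dotR_smul_left, dotR_comm]; rfl)

@[simp] lemma dotForm_apply {n : ℕ} (u v : Fin n → ℝ) : dotForm n u v = dotR u v := rfl

lemma dotForm_isSymm (n : ℕ) : (dotForm n).IsSymm := by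
  refine ⟨fun x y => ?_⟩
  simp [dotR_comm]

lemma dotForm_nondeg (n : ℕ) : (dotForm n).Nondegenerate := by
  refine ⟨fun x hx => ?_, fun x hx => ?_⟩ <;>
  exact dotR_self_eq_zero (hx x)



lemma span_top_contra {n : ℕ} (L : AddSubgroup (Fin n → ℝ))
    [Fintype (latQuot L)] (x : Fin n → ℝ) (hxne : x ≠ 0)
    (horth : ∀ l ∈ L, dotR x l = 0) : False := by
  have hxdual : ∀ t : ℝ, t • x ∈ dualLattice L := by
    intro t l hl
    exact ⟨0, by rw [dotR_smul_left, horth l hl]; simp⟩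
  set ρ : ℝ →+ latQuot L :=
    { toFun := fun t => mkQ L ⟨t • x, hxdual t⟩
      map_zero' := by
        show mkQ L ⟨(0:ℝ) • x, hxdual 0⟩ = 0
        have : (⟨(0:ℝ) • x, hxdual 0⟩ : dualLattice L) = 0 := by
          ext; simp
        rw [this]
        rfl
      map_add' := by
        intro s t
        show mkQ L ⟨(s+t) • x, hxdual (s+t)⟩
            = mkQ L ⟨s • x, hxdual s⟩ + mkQ L ⟨t • x, hxdual t⟩
        have : (⟨(s+t) • x, hxdual (s+t)⟩ : dualLattice L)
            = ⟨s • x, hxdual s⟩ + ⟨t • x, hxdual t⟩ := by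
          ext; simp [add_smul, add_mul]
        rw [this]
        rfl } with hρdef
  have hNpos : 0 < Fintype.card (latQuot L) := Fintype.card_pos
  have hρ : ∀ t : ℝ, ρ t = 0 := by
    intro t
    have h1 : ρ t = (Fintype.card (latQuot L)) • ρ (t / Fintype.card (latQuot L)) := by
      rw [← map_nsmul]
      congr 1
      rw [nsmul_eq_mul, mul_div_cancel₀]
      exact_mod_cast hNpos.ne'
    rw [h1, card_nsmul_eq_zero]
  have hxL : x ∈ L := by
    have h0 := hρ 1
    have : (⟨(1:ℝ) • x, hxdual 1⟩ : dualLattice L) ∈ L.addSubgroupOf (dualLattice L) :=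
      (QuotientAddGroup.eq_zero_iff _).1 h0
    rw [AddSubgroup.mem_addSubgroupOf] at this
    simpa using this
  exact hxne (dotR_self_eq_zero (horth x hxL))



/-- A proper subspace admits a nonzero orthogonal vector; consequence:
the ℝ-span of `L` is everything when `L*/L` is finite. -/
lemma span_top_of_finite_quot {n : ℕ} (L : AddSubgroup (Fin n → ℝ))
    [Fintype (latQuot L)] :
    Submodule.span ℝ (L : Set (Fin n → ℝ)) = ⊤ := by
  by_contra h
  set eL : (Fin n → ℝ) ≃ₗ[ℝ] EuclideanSpace ℝ (Fin n) :=
    (WithLp.linearEquiv 2 ℝ (Fin n → ℝ)).symm with heL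
  set V : Submodule ℝ (EuclideanSpace ℝ (Fin n)) :=
    (Submodule.span ℝ (L : Set (Fin n → ℝ))).map (eL : (Fin n → ℝ) →ₗ[ℝ] EuclideanSpace ℝ (Fin n)) with hV
  have hVne : V ≠ ⊤ := by
    intro hVtop
    apply h
    rw [eq_top_iff]
    intro v _
    have : eL v ∈ V := hVtop ▸ Submodule.mem_top
    obtain ⟨w, hw, hwv⟩ := this
    rwa [← eL.injective hwv]
  have hbot : Vᗮ ≠ ⊥ := by
    rw [Ne, Submodule.orthogonal_eq_bot_iff]
    exact hVne
  obtain ⟨x', hx'V, hx'ne⟩ := Submodule.exists_mem_ne_zero_of_ne_bot hbot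
  set x : Fin n → ℝ := eL.symm x' with hx
  have hxne : x ≠ 0 := by
    simp only [hx, Ne, LinearEquiv.map_eq_zero_iff]
    exact hx'ne
  have horth : ∀ l ∈ L, dotR x l = 0 := by
    intro l hl
    have hlV : eL l ∈ V := Submodule.mem_map_of_mem (Submodule.subset_span hl)
    have := (Submodule.mem_orthogonal V x').1 hx'V (eL l) hlV
    rw [← this]
    simp only [PiLp.inner_apply, RCLike.inner_apply, conj_trivial]
    have hxx : ∀ i, x' i = x i := fun i => rfl
    simp [dotR, hxx, heL, mul_comm]
  exact span_top_contra L x hxne horth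



lemma dotR_le_norm {n : ℕ} (x : Fin n → ℝ) : dotR x x ≤ n * ‖x‖ ^ 2 := by
  have : ∀ i : Fin n, x i * x i ≤ ‖x‖ ^ 2 := by
    intro i
    have h1 : ‖x i‖ ≤ ‖x‖ := norm_le_pi_norm x i
    have h2 : x i * x i = ‖x i‖ ^ 2 := by
      rw [Real.norm_eq_abs, _root_.sq_abs]; ring
    rw [h2]
    exact pow_le_pow_left₀ (norm_nonneg _) h1 2
  calc dotR x x ≤ ∑ _i : Fin n, ‖x‖ ^ 2 := Finset.sum_le_sum fun i _ => this i
  _ = n * ‖x‖ ^ 2 := by simp [mul_comm]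

/-- Double dual: if `M` is discrete (in the quadratic-form sense) and spans,
then any vector pairing integrally with everything that pairs integrally
with `M` lies in `M`. -/
lemma double_dual {n : ℕ} (M : AddSubgroup (Fin n → ℝ))
    (hd : ∃ ε : ℝ, 0 < ε ∧ ∀ x ∈ M, x ≠ 0 → ε ≤ dotR x x)
    (hs : Submodule.span ℝ (M : Set (Fin n → ℝ)) = ⊤)
    (m : Fin n → ℝ)
    (hm : ∀ y : Fin n → ℝ, (∀ x ∈ M, ∃ z : ℤ, dotR y x = z) → ∃ z : ℤ, dotR m y = z) :
    m ∈ M := by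
  classical
  set Msub : Submodule ℤ (Fin n → ℝ) := AddSubgroup.toIntSubmodule M with hMsub
  have hMmem : ∀ v : Fin n → ℝ, v ∈ Msub ↔ v ∈ M := fun v => Iff.rfl
  haveI hdisc : DiscreteTopology Msub := by
    obtain ⟨ε, hε, hb⟩ := hd
    rw [discreteTopology_iff_isOpen_singleton_zero]
    rw [isOpen_induced_iff]
    refine ⟨Metric.ball 0 (Real.sqrt (ε / (n + 1))), Metric.isOpen_ball, ?_⟩
    ext ⟨v, hv⟩
    simp only [Set.mem_preimage, Metric.mem_ball, Set.mem_singleton_iff]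
    rw [dist_zero_right]
    constructor
    · intro hlt
      by_contra hne
      have hvne : v ≠ 0 := by
        intro h0
        apply hne
        exact Subtype.ext h0
      have h1 : ε ≤ dotR v v := hb v hv hvne
      have h2 : dotR v v ≤ n * ‖v‖ ^ 2 := dotR_le_norm v
      have h3 : ‖v‖ ^ 2 < ε / (n + 1) := by
        have := Real.sq_sqrt (show (0:ℝ) ≤ ε / (n+1) by positivity)
        calc ‖v‖ ^ 2 < Real.sqrt (ε / (n+1)) ^ 2 := by
              apply pow_lt_pow_left₀ hlt (norm_nonneg _)
              norm_num
        _ = ε / (n+1) := by rw [this]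
      have h4 : (n : ℝ) * ‖v‖ ^ 2 < ε := by
        calc (n:ℝ) * ‖v‖ ^ 2 ≤ (n+1) * ‖v‖ ^ 2 := by nlinarith [sq_nonneg ‖v‖]
        _ < (n+1) * (ε / (n+1)) := by
              apply mul_lt_mul_of_pos_left h3
              positivity
        _ = ε := by field_simp
      linarith
    · intro h0
      have : v = 0 := by simpa using congrArg Subtype.val h0
      rw [this]
      simp only [norm_zero]
      apply Real.sqrt_pos.2
      positivity
  haveI hzl : IsZLattice ℝ Msub := ⟨by rw [hMsub, AddSubgroup.coe_toIntSubmodule]; exact hs⟩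
  haveI : Module.Finite ℤ Msub := ZLattice.module_finite ℝ Msub
  haveI : Module.Free ℤ Msub := ZLattice.module_free ℝ Msub
  set b := Module.Free.chooseBasis ℤ Msub with hb
  set Bb : Module.Basis (Module.Free.ChooseBasisIndex ℤ Msub) ℝ (Fin n → ℝ) :=
    b.ofZLatticeBasis ℝ Msub with hBb
  set d := (dotForm n).dualBasis (dotForm_nondeg n) Bb with hd2
  -- each `d i` pairs integrally with `M`
  have hdint : ∀ i, ∀ x ∈ M, ∃ z : ℤ, dotR (d i) x = z := by
    intro i x hx
    have hxs : x ∈ Submodule.span ℤ (Set.range Bb) := by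
      rw [Module.Basis.ofZLatticeBasis_span]
      exact hx
    rw [Module.Basis.mem_span_iff_repr_mem] at hxs
    obtain ⟨z, hz⟩ := hxs i
    refine ⟨z, ?_⟩
    have hrepr : dotForm n (d i) x = Bb.repr x i := by
      conv_lhs => rw [← Bb.sum_repr x]
      rw [map_sum]
      have hdb : ∀ j, dotR (d i) (Bb j) = if j = i then 1 else 0 := fun j =>
        LinearMap.BilinForm.apply_dualBasis_left (dotForm_nondeg n) Bb i j
      simp [hdb]
    rw [show dotR (d i) x = dotForm n (d i) x from rfl, hrepr, ← hz]
    simp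
  have key : ∀ i, ∃ z : ℤ, (algebraMap ℤ ℝ) z = Bb.repr m i := by
    intro i
    obtain ⟨z, hz⟩ := hm (d i) (hdint i)
    refine ⟨z, ?_⟩
    have hrepr : dotForm n m (d i) = Bb.repr m i := by
      conv_lhs => rw [← Bb.sum_repr m]
      have hdb : ∀ j, dotForm n (Bb j) (d i) = if j = i then 1 else 0 := fun j =>
        LinearMap.BilinForm.apply_dualBasis_right (dotForm_nondeg n)
          (dotForm_isSymm n) Bb j i
      simp [-Module.Basis.sum_repr, map_sum, LinearMap.sum_apply, LinearMap.map_smul, LinearMap.smul_apply, hdb]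
    rw [show dotR m (d i) = dotForm n m (d i) from rfl, hrepr] at hz
    rw [hz]
    simp
  have hmem : m ∈ Submodule.span ℤ (Set.range Bb) := by
    rw [Module.Basis.mem_span_iff_repr_mem]
    intro i
    obtain ⟨z, hz⟩ := key i
    exact ⟨z, hz⟩
  rw [Module.Basis.ofZLatticeBasis_span] at hmem
  exact hmem



lemma row_lemma {B : Type} [Fintype B] [DecidableEq B] (M Mt : Matrix B B ℕ)
    (hMt : ∀ x y, Mt x y = M y x) (h : M * Mt = 1) (x : B) :
    ∃ y, M x y = 1 ∧ ∀ z, M x z ≠ 0 → z = y := by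
  have hx : ∑ y, M x y * M x y = 1 := by
    have h1 := congrFun (congrFun h x) x
    rw [Matrix.mul_apply] at h1
    simpa [hMt, Matrix.one_apply] using h1
  obtain ⟨y, -, hy⟩ := Finset.exists_ne_zero_of_sum_ne_zero (by rw [hx]; norm_num :
    ∑ y, M x y * M x y ≠ 0)
  have hy1 : M x y = 1 := by
    have hle : M x y * M x y ≤ 1 := by
      rw [← hx]
      exact Finset.single_le_sum (f := fun w => M x w * M x w)
        (fun i _ => Nat.zero_le _) (Finset.mem_univ y)
    have hpos : 1 ≤ M x y := Nat.one_le_iff_ne_zero.2 (by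
      intro h0; exact hy (by rw [h0]; ring))
    nlinarith
  refine ⟨y, hy1, ?_⟩
  intro z hz
  by_contra hne
  have hpos : 1 ≤ M x z := Nat.one_le_iff_ne_zero.2 hz
  have h2 : ({y, z} : Finset B) ⊆ Finset.univ := Finset.subset_univ _
  have h3 : ∑ w ∈ ({y, z} : Finset B), M x w * M x w ≤ 1 := by
    rw [← hx]
    exact Finset.sum_le_sum_of_subset h2
  rw [Finset.sum_pair (fun hyz => hne hyz.symm)] at h3
  nlinarith

/- STATEMENT 7: uniqueness of the compatible nimrep for torus modular
invariants.  Given a torus modular invariant Z with data (D.plus, D.minus,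
beta), the union E of the intersections [u] ∩ beta([u]) is a lattice with
L <= E <= L^*, and the translation nimrep on L^* / E^* is the unique nimrep
(up to equivalence) whose exponent multiplicities equal the diagonal entries
Z_{[mu],[mu]}. -/
theorem stmt_7 {n : ℕ} (L : AddSubgroup (Fin n → ℝ))
    (hEven : IsEvenLattice L) (hLL : L ≤ dualLattice L)
    [Fintype (latQuot L)]
    (Z : latQuot L → latQuot L → ℕ)
    (hZS : (Matrix.of fun x y => (Z x y : ℂ)) * Smat L
          = Smat L * Matrix.of fun x y => (Z x y : ℂ))
    (hZ0 : Z 0 0 = 1)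
    (h01 : ∀ x y, Z x y = 0 ∨ Z x y = 1)
    (hadd : ∀ u v u' v' : latQuot L,
      Z u v = 1 → Z u' v' = 1 → Z (u + u') (v + v') = 1)
    -- the data `(D_+, D_-, β)` classifying the modular invariant `Z`
    (β : latQuot L → latQuot L)
    (hβ : ∀ u v, Z u v = 1 ↔ (u ∈ DpStar L Z ∧ v - β u ∈ DmSet L Z))
    -- a nimrep ...
    (B : Type) [Fintype B] [DecidableEq B] [Nonempty B]
    (N : latQuot L → Matrix B B ℕ)
    (hone : N 0 = 1)
    (hmul : ∀ u v, N u * N v = N (u + v))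
    (htr : ∀ u, N (-u) = (N u).transpose)
    (hindec : ∀ x y : B, ∃ u, N u x y ≠ 0)
    -- ... compatible with `Z`: the exponents of the nimrep are exactly the
    -- diagonal of `Z` (each diagonal entry being `0` or `1` here)
    (hcomp : ∀ e : dualLattice L,
      ((∃ v : B → ℂ, v ≠ 0 ∧ ∀ (u : dualLattice L) (x : B),
          ∑ y, (N (mkQ L u) x y : ℂ) * v y
            = Complex.exp (2 * Real.pi * Complex.I *
                dotR (e : Fin n → ℝ) (u : Fin n → ℝ)) * v x)
        ↔ Z (mkQ L e) (mkQ L e) = 1)) :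
    ∃ E : AddSubgroup (Fin n → ℝ), L ≤ E ∧ E ≤ dualLattice L ∧
      -- `E` is the union over `[u]_+ ∈ D_+^*/D_+` of `[u]_+ ∩ β([u]_+)`,
      -- i.e. the union of the diagonal cosets of `Z`
      (∀ x : dualLattice L, ((x : Fin n → ℝ) ∈ E ↔
          (mkQ L x ∈ DpStar L Z ∧ mkQ L x - β (mkQ L x) ∈ DmSet L Z))) ∧
      -- the given nimrep is equivalent to the translation nimrep on `L*/E*`
      ∃ φ : B ≃ (latQuot L ⧸ Kdual L E),
        ∀ (u : latQuot L) (x y : B),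
          N u x y ≠ 0 ↔ QuotientAddGroup.mk' (Kdual L E) u + φ x = φ y := by
  classical
  obtain ⟨x₀⟩ := (inferInstance : Nonempty B)
  -- Step A: each N g is a permutation matrix
  have hperm : ∀ (g : latQuot L) (x : B),
      ∃ y, N g x y = 1 ∧ ∀ z, N g x z ≠ 0 → z = y := by
    intro g x
    refine row_lemma (N g) (N (-g)) (fun a b => ?_) ?_ x
    · rw [htr g]; rfl
    · rw [hmul, add_neg_cancel, hone]
  choose f hf1 hf2 using hperm
  have hne : ∀ g x y, N g x y ≠ 0 ↔ f g x = y := by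
    intro g x y
    constructor
    · intro h
      exact (hf2 g x y h).symm
    · intro h
      rw [← h, hf1]
      exact one_ne_zero
  have hnum : ∀ g x y, N g x y = if f g x = y then 1 else 0 := by
    intro g x y
    by_cases hxy : f g x = y
    · rw [if_pos hxy, ← hxy, hf1]
    · rw [if_neg hxy]
      by_contra hz
      exact hxy ((hne g x y).1 hz)
  have hf0 : ∀ x, f 0 x = x := by
    intro x
    exact (hf2 0 x x (by rw [hone]; simp [Matrix.one_apply])).symm
  have hfadd : ∀ g h x, f (g + h) x = f h (f g x) := by
    intro g h x
    refine (hf2 (g + h) x _ ?_).symm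
    rw [← hmul, Matrix.mul_apply]
    intro h0
    rw [Finset.sum_eq_zero_iff] at h0
    have h1 := h0 (f g x) (Finset.mem_univ _)
    rw [hf1, hf1] at h1
    simp at h1
  have hfcomm : ∀ g h x, f g (f h x) = f h (f g x) := by
    intro g h x
    rw [← hfadd h g x, add_comm, hfadd]
  have hfinv : ∀ g x, f (-g) (f g x) = x := by
    intro g x
    rw [← hfadd, add_neg_cancel, hf0]
  have htrans : ∀ x y : B, ∃ g, f g x = y := fun x y =>
    (hindec x y).imp (fun u hu => (hne u x y).1 hu)
  have hstab : ∀ g, f g x₀ = x₀ → ∀ x, f g x = x := by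
    intro g hg x
    obtain ⟨w, hw⟩ := htrans x₀ x
    rw [← hw, hfcomm, hg]
  set K : AddSubgroup (latQuot L) :=
    { carrier := {g | ∀ x, f g x = x}
      zero_mem' := hf0
      add_mem' := by
        intro a b ha hb x
        rw [hfadd, ha, hb]
      neg_mem' := by
        intro a ha x
        have h1 := hfinv a x
        rwa [ha x] at h1 } with hK
  have hKmem : ∀ g, g ∈ K ↔ ∀ x, f g x = x := fun g => Iff.rfl
  -- Step B: bijection with the quotient
  set ψ : latQuot L ⧸ K → B := fun q => f q.out x₀ with hψdef
  have hψ : ∀ g : latQuot L, ψ (QuotientAddGroup.mk g) = f g x₀ := by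
    intro g
    set o : latQuot L := (QuotientAddGroup.mk g : latQuot L ⧸ K).out with ho
    have h2 : (QuotientAddGroup.mk o : latQuot L ⧸ K) = QuotientAddGroup.mk g :=
      QuotientAddGroup.out_eq' _
    have h3 : -o + g ∈ K := QuotientAddGroup.eq.1 h2
    show f o x₀ = f g x₀
    conv_rhs => rw [← add_neg_cancel_left o g]
    rw [hfadd]
    exact ((hKmem _).1 h3 (f o x₀)).symm
  have hinj : Function.Injective ψ := by
    intro q r hqr
    rw [← QuotientAddGroup.out_eq' q, ← QuotientAddGroup.out_eq' r] at hqr ⊢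
    rw [hψ, hψ] at hqr
    apply QuotientAddGroup.eq.2
    apply (hKmem _).2
    apply hstab
    rw [add_comm, hfadd, ← hqr, hfinv]
  have hsurj : Function.Surjective ψ := by
    intro y
    obtain ⟨g, hg⟩ := htrans x₀ y
    exact ⟨QuotientAddGroup.mk g, by rw [hψ]; exact hg⟩
  set eqv : (latQuot L ⧸ K) ≃ B := Equiv.ofBijective ψ ⟨hinj, hsurj⟩ with heqv
  set φ : B ≃ (latQuot L ⧸ K) := eqv.symm with hφ
  have hψφ : ∀ x : B, ψ (φ x) = x := fun x => eqv.apply_symm_apply x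
  have hψadd : ∀ (g : latQuot L) (q : latQuot L ⧸ K),
      ψ (QuotientAddGroup.mk g + q) = f g (ψ q) := by
    intro g q
    conv_lhs => rw [← QuotientAddGroup.out_eq' q]
    conv_rhs => rw [← QuotientAddGroup.out_eq' q]
    rw [← QuotientAddGroup.mk_add, hψ, hψ, hfadd, hfcomm]
  have hmainK : ∀ (u : latQuot L) (x y : B),
      N u x y ≠ 0 ↔ QuotientAddGroup.mk' K u + φ x = φ y := by
    intro u x y
    rw [hne, ← hinj.eq_iff, QuotientAddGroup.mk'_apply, hψadd, hψφ, hψφ]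
  -- Step C: the lattice E
  have hdual_symm : ∀ (w : dualLattice L) (l : Fin n → ℝ), l ∈ L →
      ∃ z : ℤ, dotR l (w : Fin n → ℝ) = z := by
    intro w l hl
    obtain ⟨z, hz⟩ := w.2 l hl
    exact ⟨z, by rw [dotR_comm]; exact hz⟩
  set Esub : AddSubgroup (Fin n → ℝ) :=
    { carrier := {v | v ∈ dualLattice L ∧ ∀ w : dualLattice L,
        mkQ L w ∈ K → ∃ z : ℤ, dotR v (w : Fin n → ℝ) = z}
      zero_mem' := ⟨(dualLattice L).zero_mem, fun w _ => ⟨0, by simp [dotR]⟩⟩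
      add_mem' := by
        rintro a b ⟨ha1, ha2⟩ ⟨hb1, hb2⟩
        refine ⟨(dualLattice L).add_mem ha1 hb1, fun w hw => ?_⟩
        obtain ⟨z1, h1⟩ := ha2 w hw
        obtain ⟨z2, h2⟩ := hb2 w hw
        exact ⟨z1 + z2, by rw [dotR_add_left, h1, h2]; push_cast; ring⟩
      neg_mem' := by
        rintro a ⟨ha1, ha2⟩
        refine ⟨(dualLattice L).neg_mem ha1, fun w hw => ?_⟩
        obtain ⟨z1, h1⟩ := ha2 w hw
        exact ⟨-z1, by rw [dotR_neg_left, h1]; push_cast; ring⟩ } with hE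
  have hEmem : ∀ v, v ∈ Esub ↔ (v ∈ dualLattice L ∧ ∀ w : dualLattice L,
      mkQ L w ∈ K → ∃ z : ℤ, dotR v (w : Fin n → ℝ) = z) := fun v => Iff.rfl
  -- Step D: key equivalence between exponents and the diagonal of Z
  have hKE : ∀ e : dualLattice L,
      (∀ w : dualLattice L, mkQ L w ∈ K →
        ∃ z : ℤ, dotR (e : Fin n → ℝ) (w : Fin n → ℝ) = z)
        ↔ Z (mkQ L e) (mkQ L e) = 1 := by
    intro e
    rw [← hcomp e]
    constructor
    · intro he
      have hpick : ∀ y : B, ∃ u : dualLattice L, f (mkQ L u) x₀ = y := by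
        intro y
        obtain ⟨g, hg⟩ := htrans x₀ y
        refine ⟨g.out, ?_⟩
        have h1 : mkQ L g.out = g := QuotientAddGroup.out_eq' g
        rw [h1]
        exact hg
      choose uu huu using hpick
      refine ⟨fun y => Complex.exp (2 * Real.pi * Complex.I *
        dotR (e : Fin n → ℝ) (uu y : Fin n → ℝ)), ?_, ?_⟩
      · intro hv0
        exact Complex.exp_ne_zero _ (congrFun hv0 x₀)
      · intro u x
        have hsum : ∑ y, (N (mkQ L u) x y : ℂ) *
            Complex.exp (2 * Real.pi * Complex.I *
              dotR (e : Fin n → ℝ) (uu y : Fin n → ℝ))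
            = Complex.exp (2 * Real.pi * Complex.I *
              dotR (e : Fin n → ℝ) (uu (f (mkQ L u) x) : Fin n → ℝ)) := by
          rw [Finset.sum_eq_single (f (mkQ L u) x)]
          · rw [hf1]; simp
          · intro b _ hb
            have hz : N (mkQ L u) x b = 0 := by
              by_contra h0
              exact hb ((hne _ _ _).1 h0).symm
            rw [hz]; simp
          · intro hmem
            exact absurd (Finset.mem_univ _) hmem
        rw [hsum]
        set y₀ := f (mkQ L u) x with hy₀
        set w : dualLattice L := u + uu x - uu y₀ with hw
        have hwsplit : w = (uu x + u) + -(uu y₀) := by rw [hw]; abel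
        have hwK : mkQ L w ∈ K := by
          apply (hKmem _).2
          apply hstab
          have hmk : mkQ L w = (mkQ L (uu x) + mkQ L u) + -(mkQ L (uu y₀)) := by
            rw [hwsplit]
            rfl
          have h5 := hfinv (mkQ L (uu y₀)) x₀
          rw [huu y₀] at h5
          rw [hmk, hfadd, hfadd, huu x, ← hy₀, h5]
        obtain ⟨z, hz⟩ := he w hwK
        have hcoe : (w : Fin n → ℝ) = (u : Fin n → ℝ) + (uu x : Fin n → ℝ)
            - (uu y₀ : Fin n → ℝ) := by
          rw [hw]; push_cast; ring
        rw [hcoe, dotR_sub_right, dotR_add_right] at hz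
        have hz2 : dotR (e : Fin n → ℝ) (uu y₀ : Fin n → ℝ)
            = dotR (e : Fin n → ℝ) (u : Fin n → ℝ)
              + dotR (e : Fin n → ℝ) (uu x : Fin n → ℝ) - z := by linarith
        rw [hz2]
        push_cast
        rw [mul_sub, mul_add, Complex.exp_sub, Complex.exp_add]
        rw [show (2 * (Real.pi : ℂ) * Complex.I) * (z : ℂ)
            = (z : ℂ) * (2 * Real.pi * Complex.I) from by ring]
        rw [Complex.exp_int_mul_two_pi_mul_I, div_one]
    · rintro ⟨v, hv0, hv⟩ w hwK
      obtain ⟨x, hx⟩ := Function.ne_iff.1 hv0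
      have heq := hv w x
      have hsum : ∑ y, (N (mkQ L w) x y : ℂ) * v y = v x := by
        rw [Finset.sum_eq_single x]
        · rw [hnum, if_pos ((hKmem _).1 hwK x)]
          simp
        · intro b _ hb
          rw [hnum, if_neg]
          · simp
          · rw [(hKmem _).1 hwK x]
            exact fun hxb => hb hxb.symm
        · intro hmem
          exact absurd (Finset.mem_univ _) hmem
      rw [hsum] at heq
      set c := Complex.exp (2 * Real.pi * Complex.I *
        dotR (e : Fin n → ℝ) (w : Fin n → ℝ)) with hc
      have h2 : (c - 1) * v x = 0 := by
        rw [sub_mul, one_mul, ← heq]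
        ring
      have hc1 : c = 1 := by
        rcases mul_eq_zero.1 h2 with h | h
        · exact sub_eq_zero.1 h
        · exact absurd h hx
      rw [hc, Complex.exp_eq_one_iff] at hc1
      obtain ⟨k, hk⟩ := hc1
      have h2pi : (2 * (Real.pi : ℂ) * Complex.I) ≠ 0 := by
        simp [Real.pi_ne_zero, Complex.I_ne_zero]
      have h3 : ((dotR (e : Fin n → ℝ) (w : Fin n → ℝ) : ℝ) : ℂ) = (k : ℂ) := by
        apply mul_left_cancel₀ h2pi
        rw [show (2 * (Real.pi : ℂ) * Complex.I) * (k : ℂ)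
            = (k : ℂ) * (2 * Real.pi * Complex.I) from by ring]
        exact hk
      exact ⟨k, by exact_mod_cast h3⟩
  -- characterization of E
  have hEchar : ∀ x : dualLattice L, ((x : Fin n → ℝ) ∈ Esub ↔
      (mkQ L x ∈ DpStar L Z ∧ mkQ L x - β (mkQ L x) ∈ DmSet L Z)) := by
    intro x
    rw [← hβ (mkQ L x) (mkQ L x), ← hKE x]
    constructor
    · rintro ⟨-, h2⟩
      exact h2
    · intro h
      exact ⟨x.2, h⟩
  -- Step E: Kdual L Esub = K
  set Hgrp : AddSubgroup (Fin n → ℝ) :=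
    { carrier := {v | ∃ hv : v ∈ dualLattice L, mkQ L ⟨v, hv⟩ ∈ K}
      zero_mem' := ⟨(dualLattice L).zero_mem, K.zero_mem⟩
      add_mem' := by
        rintro a b ⟨ha, hKa⟩ ⟨hb, hKb⟩
        refine ⟨(dualLattice L).add_mem ha hb, ?_⟩
        have h1 : (⟨a + b, (dualLattice L).add_mem ha hb⟩ : dualLattice L)
            = ⟨a, ha⟩ + ⟨b, hb⟩ := rfl
        rw [h1]
        exact K.add_mem hKa hKb
      neg_mem' := by
        rintro a ⟨ha, hKa⟩
        refine ⟨(dualLattice L).neg_mem ha, ?_⟩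
        have h1 : (⟨-a, (dualLattice L).neg_mem ha⟩ : dualLattice L)
            = -(⟨a, ha⟩ : dualLattice L) := rfl
        rw [h1]
        exact K.neg_mem hKa } with hH
  have hLH : ∀ l ∈ L, l ∈ Hgrp := by
    intro l hl
    refine ⟨hLL hl, ?_⟩
    have h1 : mkQ L ⟨l, hLL hl⟩ = 0 := (QuotientAddGroup.eq_zero_iff _).2 (by
      rw [AddSubgroup.mem_addSubgroupOf]
      exact hl)
    rw [h1]
    exact K.zero_mem
  have hNc : 0 < Fintype.card (latQuot L) := Fintype.card_pos
  have hdotpos : ∀ v : Fin n → ℝ, v ≠ 0 → 0 < dotR v v := by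
    intro v hv
    rcases lt_or_eq_of_le (dotR_self_nonneg v) with h | h
    · exact h
    · exact absurd (dotR_self_eq_zero h.symm) hv
  have hdiscH : ∃ ε : ℝ, 0 < ε ∧ ∀ x ∈ Hgrp, x ≠ 0 → ε ≤ dotR x x := by
    refine ⟨((Fintype.card (latQuot L) : ℝ) ^ 2)⁻¹, by positivity, ?_⟩
    rintro x ⟨hx, hxK⟩ hxne
    set c := Fintype.card (latQuot L) with hcdef
    have h1 : (c • (⟨x, hx⟩ : dualLattice L)) ∈ L.addSubgroupOf (dualLattice L) := by
      rw [← QuotientAddGroup.eq_zero_iff]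
      have h2 : (QuotientAddGroup.mk (c • (⟨x, hx⟩ : dualLattice L)) : latQuot L)
          = c • mkQ L ⟨x, hx⟩ :=
        map_nsmul (QuotientAddGroup.mk' (L.addSubgroupOf (dualLattice L))) _ _
      rw [show (QuotientAddGroup.mk (c • (⟨x, hx⟩ : dualLattice L)) : latQuot L) = c • mkQ L ⟨x, hx⟩ from h2]
      rw [card_nsmul_eq_zero]
    rw [AddSubgroup.mem_addSubgroupOf] at h1
    have h2 : ((c : ℝ) • x) ∈ L := by
      have h3 : ((c • (⟨x, hx⟩ : dualLattice L) : dualLattice L) : Fin n → ℝ)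
          = (c : ℝ) • x := by
        push_cast
        rw [Nat.cast_smul_eq_nsmul]
      rwa [h3] at h1
    have h4 : ((c : ℝ) • x) ≠ 0 := by
      intro h0
      apply hxne
      have hc0 : (c : ℝ) ≠ 0 := by positivity
      exact (smul_eq_zero.1 h0).resolve_left hc0
    obtain ⟨z, hz⟩ := hLL h2 ((c : ℝ) • x) h2
    have h5 : dotR ((c : ℝ) • x) ((c : ℝ) • x) = (c : ℝ) ^ 2 * dotR x x := by
      rw [dotR_smul_left, dotR_comm, dotR_smul_left, dotR_comm]
      ring
    have h6 : 0 < dotR ((c : ℝ) • x) ((c : ℝ) • x) := hdotpos _ h4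
    have h7 : (1 : ℝ) ≤ z := by
      have : (0 : ℝ) < z := by rw [← hz]; exact h6
      exact_mod_cast this
    have h8 : (1 : ℝ) ≤ (c : ℝ) ^ 2 * dotR x x := by
      rw [← h5, hz]; exact h7
    rw [inv_le_iff_one_le_mul₀ (by positivity)]
    nlinarith [hdotpos x hxne]
  have hspanH : Submodule.span ℝ (Hgrp : Set (Fin n → ℝ)) = ⊤ := by
    rw [eq_top_iff, ← span_top_of_finite_quot L]
    exact Submodule.span_mono (fun v hv => hLH v hv)
  have hKK : Kdual L Esub = K := by
    ext g
    constructor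
    · intro hg
      obtain ⟨m, hmInt, hmk⟩ := AddSubgroup.mem_map.1 hg
      have hmH : (m : Fin n → ℝ) ∈ Hgrp := by
        apply double_dual Hgrp hdiscH hspanH
        intro y hy
        have hyE : y ∈ Esub := by
          refine ⟨?_, ?_⟩
          · intro l hl
            exact hy l (hLH l hl)
          · intro w hw
            refine hy (w : Fin n → ℝ) ?_
            exact ⟨w.2, by rwa [Subtype.coe_eta]⟩
        obtain ⟨z, hz⟩ := hmInt y hyE
        exact ⟨z, hz⟩
      obtain ⟨hv, hvK⟩ := hmH
      have hmg : mkQ L m = g := hmk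
      rw [← hmg]
      rwa [show (⟨(m : Fin n → ℝ), hv⟩ : dualLattice L) = m from Subtype.ext rfl] at hvK
    · intro hg
      refine AddSubgroup.mem_map.2 ⟨g.out, ?_, QuotientAddGroup.out_eq' g⟩
      intro e he
      obtain ⟨-, he2⟩ := (hEmem e).1 he
      obtain ⟨z, hz⟩ := he2 g.out (by
        rw [show mkQ L g.out = g from QuotientAddGroup.out_eq' g]
        exact hg)
      exact ⟨z, by rw [dotR_comm]; exact hz⟩
  refine ⟨Esub, ?_, ?_, hEchar, ?_⟩
  · intro l hl
    exact ⟨hLL hl, fun w _ => hdual_symm w l hl⟩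
  · intro v hv
    exact hv.1
  · rw [hKK]
    exact ⟨φ, fun u x y => hmainK u x y⟩

end
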